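/- Let d ≥ 1, fix y₀ ∈ ℝᵈ, let β : [0,1] → ℝ be continuous and positive, T(t) = ∫₀ᵗ β(s) ds with T(s) > 0 for s ∈ (0,1], and define w_t(y|y₀) = (T'(t)/2)((y − e^{−T(t)/2} y₀)/(1 − e^{−T(t)}) − y). Then the time-reversed field w̃_t(y|y₀) = −w_{1−t}(y|y₀) satisfies, for all t ∈ [0,1) and y ∈ ℝᵈ, w̃_t(y|y₀) = −(T'(1−t)/2) · (e^{−T(1−t)} y − e^{−T(1−t)/2} y₀)/(1 − e^{−T(1−t)}); in particular, the time-reversed Fokker–Planck/probability-flow vector field of the VP diffusion coincides with the conditional vector field u_t(y|y₀) = (α'_{1−t}/(1 − α_{1−t}²))(α_{1−t} y − y₀) obtained from the Gaussian-path construction with α_t = e^{−T(t)/2}. -/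

import Mathlib

open Set intervalIntegral

noncomputable section

/-- **Time-reversed VP probability-flow field coincides with the Gaussian-path conditional
vector field:** with `w_t(y|y₀) = (T'(t)/2)((y − e^{−T(t)/2} y₀)/(1 − e^{−T(t)}) − y)`
(the Fokker–Planck field of the VP diffusion), the time-reversed field
`w̃_t(y|y₀) = −w_{1−t}(y|y₀)` satisfies, for all `t ∈ [0,1)` and `y`,
`w̃_t(y|y₀) = −(T'(1−t)/2)(e^{−T(1−t)} y − e^{−T(1−t)/2} y₀)/(1 − e^{−T(1−t)})`, and in
particular equals `u_t(y|y₀) = (α'_{1−t}/(1 − α_{1−t}²))(α_{1−t} y − y₀)` with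
`α_t = e^{−T(t)/2}`. -/
theorem VP_time_reversed_field_eq_conditional_vf
    {d : ℕ} (hd : 1 ≤ d) (y₀ : EuclideanSpace ℝ (Fin d))
    (β : ℝ → ℝ)
    (hβ_cont : ContinuousOn β (Icc (0:ℝ) 1))
    (hβ_pos : ∀ s ∈ Icc (0:ℝ) 1, 0 < β s)
    (T T' : ℝ → ℝ)
    (hT : ∀ t, T t = ∫ s in (0:ℝ)..t, β s)
    (hT' : ∀ s ∈ Icc (0:ℝ) 1, HasDerivAt T (T' s) s)
    (hT_pos : ∀ s ∈ Ioc (0:ℝ) 1, 0 < T s)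
    (w : ℝ → EuclideanSpace ℝ (Fin d) → EuclideanSpace ℝ (Fin d))
    (hw : ∀ t y, w t y
      = (T' t / 2) •
          ((1 - Real.exp (-T t))⁻¹ • (y - Real.exp (-T t / 2) • y₀) - y))
    (α α' : ℝ → ℝ)
    (hα : ∀ t, α t = Real.exp (-T t / 2))
    (hα' : ∀ s ∈ Icc (0:ℝ) 1, HasDerivAt α (α' s) s) :
    ∀ t ∈ Ico (0:ℝ) 1, ∀ y : EuclideanSpace ℝ (Fin d),
      -w (1 - t) y
          = -(T' (1 - t) / 2) •
              ((1 - Real.exp (-T (1 - t)))⁻¹ •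
                (Real.exp (-T (1 - t)) • y - Real.exp (-T (1 - t) / 2) • y₀)) ∧
      -w (1 - t) y
          = (α' (1 - t) / (1 - α (1 - t) ^ 2)) • (α (1 - t) • y - y₀) := by

  intro t ht y
  obtain ⟨ht0, ht1⟩ := ht
  set s := 1 - t with hs
  have hsIcc : s ∈ Icc (0:ℝ) 1 := ⟨by linarith, by linarith⟩
  have hsIoc : s ∈ Ioc (0:ℝ) 1 := ⟨by simp only [hs]; linarith, by linarith⟩
  have hTpos : 0 < T s := hT_pos s hsIoc
  have hE : Real.exp (-T s) < 1 := by
    rw [Real.exp_lt_one_iff]; linarith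
  have h1E : (1 : ℝ) - Real.exp (-T s) ≠ 0 := by linarith
  -- derivative of α
  have hαfun : α = fun u => Real.exp (-T u / 2) := funext hα
  have hαderiv : HasDerivAt α (Real.exp (-T s / 2) * (-T' s / 2)) s := by
    rw [hαfun]
    have h1 : HasDerivAt (fun u => -T u / 2) (-T' s / 2) s := by
      simpa [neg_div] using ((hT' s hsIcc).neg.div_const 2)
    simpa [mul_comm] using h1.exp
  have hα'eq : α' s = Real.exp (-T s / 2) * (-T' s / 2) :=
    (hα' s hsIcc).unique hαderiv
  have hA2 : α s ^ 2 = Real.exp (-T s) := by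
    rw [hα]
    rw [← Real.exp_nat_mul]
    norm_num
    ring_nf
  constructor
  · rw [hw]
    match_scalars <;> field_simp <;> ring
  · have hE2 : Real.exp (-T s) = Real.exp (-T s / 2) ^ 2 := by
      rw [sq, ← Real.exp_add]; ring_nf
    have h1E2 : (1 : ℝ) - Real.exp (-T s / 2) ^ 2 ≠ 0 := by rw [← hE2]; exact h1E
    rw [hw, hα'eq, hA2, hα, hE2]
    generalize Real.exp (-T s / 2) = e at h1E2 ⊢
    match_scalars <;> field_simp <;> ring


end
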